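/- Let A and B be Hermitian complex n×n matrices. Then ‖exp(iA) − exp(iB)‖ ≤ ‖A − B‖, where exp is the matrix exponential and ‖·‖ is the operator norm (largest singular value). -/

import Mathlib

open NormedSpace Nat
set_option linter.unusedSectionVars false
set_option maxHeartbeats 1000000

section Aux

variable {E : Type*} [NormedRing E] [StarRing E] [CStarRing E]
  [NormedAlgebra ℂ E] [CompleteSpace E] [ContinuousStar E] [StarModule ℂ E]

/-- For skew-adjoint `x`, `exp x` has norm at most 1 (it is "unitary"). -/
lemma aux_norm_exp_skew_le_one (h1 : ‖(1 : E)‖ ≤ 1) {x : E} (hx : star x = -x) :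
    ‖exp x‖ ≤ 1 := by
  letI : NormedAlgebra ℚ E := NormedAlgebra.restrictScalars ℚ ℂ E
  have key : star (exp x) * exp x = 1 := by
    rw [star_exp, hx, ← exp_add_of_commute ((Commute.refl x).neg_left)]
    simp
  have h2 : ‖exp x‖ * ‖exp x‖ = ‖star (exp x) * exp x‖ :=
    (CStarRing.norm_star_mul_self).symm
  rw [key] at h2
  nlinarith [norm_nonneg (exp x)]

/-- Powers of norm-≤-1 elements have norm ≤ 1 (needs `‖1‖ ≤ 1`). -/
lemma aux_norm_pow_le_one (h1 : ‖(1 : E)‖ ≤ 1) {u : E} (hu : ‖u‖ ≤ 1) (N : ℕ) :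
    ‖u ^ N‖ ≤ 1 := by
  induction N with
  | zero => simpa using h1
  | succ N ih =>
    calc ‖u ^ (N + 1)‖ = ‖u ^ N * u‖ := by rw [pow_succ]
      _ ≤ ‖u ^ N‖ * ‖u‖ := norm_mul_le _ _
      _ ≤ 1 * 1 := mul_le_mul ih hu (norm_nonneg _) zero_le_one
      _ = 1 := one_mul 1

/-- Telescoping bound for differences of powers. -/
lemma aux_pow_sub_pow (h1 : ‖(1 : E)‖ ≤ 1) {u v : E} (hu : ‖u‖ ≤ 1) (hv : ‖v‖ ≤ 1)
    (N : ℕ) : ‖u ^ N - v ^ N‖ ≤ N * ‖u - v‖ := by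
  induction N with
  | zero => simp
  | succ N ih =>
    have key : u ^ (N + 1) - v ^ (N + 1) = (u ^ N - v ^ N) * u + v ^ N * (u - v) := by
      simp only [pow_succ, sub_mul, mul_sub]
      abel
    calc ‖u ^ (N + 1) - v ^ (N + 1)‖
        ≤ ‖(u ^ N - v ^ N) * u‖ + ‖v ^ N * (u - v)‖ := key ▸ norm_add_le _ _
      _ ≤ ‖u ^ N - v ^ N‖ * ‖u‖ + ‖v ^ N‖ * ‖u - v‖ :=
          add_le_add (norm_mul_le _ _) (norm_mul_le _ _)
      _ ≤ (N * ‖u - v‖) * 1 + 1 * ‖u - v‖ :=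
          add_le_add (mul_le_mul ih hu (norm_nonneg _) (by positivity))
            (mul_le_mul (aux_norm_pow_le_one h1 hv N) le_rfl (norm_nonneg _) zero_le_one)
      _ = (N + 1 : ℕ) * ‖u - v‖ := by push_cast; ring

/-- Second-order bound for the exponential. -/
lemma aux_exp_sub_one_sub (x : E) :
    ‖exp x - 1 - x‖ ≤ ‖x‖ ^ 2 * Real.exp ‖x‖ := by
  have hs : Summable fun k : ℕ => ((k ! : ℂ))⁻¹ • x ^ k := expSeries_summable' (𝕂 := ℂ) x
  have hs1 : Summable fun k : ℕ => (((k + 1)! : ℂ))⁻¹ • x ^ (k + 1) :=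
    (summable_nat_add_iff 1).2 hs
  have hs2 : Summable fun k : ℕ => (((k + 2)! : ℂ))⁻¹ • x ^ (k + 2) := by
    simpa using (summable_nat_add_iff 1).2 hs1
  have hseq : exp x - 1 - x = ∑' k : ℕ, (((k + 2)! : ℂ))⁻¹ • x ^ (k + 2) := by
    have hE : exp x = ∑' k : ℕ, ((k ! : ℂ))⁻¹ • x ^ k := by rw [exp_eq_tsum (𝕂 := ℂ)]
    rw [hE, hs.tsum_eq_zero_add, hs1.tsum_eq_zero_add]
    norm_num
  rw [hseq]
  have hnorm : ∀ k : ℕ, ‖(((k + 2)! : ℂ))⁻¹ • x ^ (k + 2)‖ ≤ ‖x‖ ^ 2 * (‖x‖ ^ k / k !) := by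
    intro k
    rw [norm_smul]
    have h1 : ‖(((k + 2)! : ℂ))⁻¹‖ = (((k + 2)! : ℝ))⁻¹ := by
      rw [norm_inv]; norm_cast
    rw [h1]
    have h2 : ‖x ^ (k + 2)‖ ≤ ‖x‖ ^ (k + 2) := norm_pow_le' x (by omega)
    have h3 : (((k + 2)! : ℝ))⁻¹ ≤ ((k ! : ℝ))⁻¹ := by
      apply inv_anti₀
      · positivity
      · exact_mod_cast Nat.factorial_le (by omega)
    calc (((k + 2)! : ℝ))⁻¹ * ‖x ^ (k + 2)‖
        ≤ ((k ! : ℝ))⁻¹ * ‖x‖ ^ (k + 2) := by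
          apply mul_le_mul h3 h2 (norm_nonneg _) (by positivity)
      _ = ‖x‖ ^ 2 * (‖x‖ ^ k / k !) := by ring
  have hsn : Summable fun k : ℕ => ‖(((k + 2)! : ℂ))⁻¹ • x ^ (k + 2)‖ := by
    have := norm_expSeries_summable' (𝕂 := ℂ) x
    simpa using (summable_nat_add_iff 2).2 this
  have hsb : Summable fun k : ℕ => ‖x‖ ^ 2 * (‖x‖ ^ k / k !) :=
    (Real.summable_pow_div_factorial ‖x‖).mul_left _
  calc ‖∑' k : ℕ, (((k + 2)! : ℂ))⁻¹ • x ^ (k + 2)‖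
      ≤ ∑' k : ℕ, ‖(((k + 2)! : ℂ))⁻¹ • x ^ (k + 2)‖ := norm_tsum_le_tsum_norm hsn
    _ ≤ ∑' k : ℕ, ‖x‖ ^ 2 * (‖x‖ ^ k / k !) := Summable.tsum_le_tsum hnorm hsn hsb
    _ = ‖x‖ ^ 2 * ∑' k : ℕ, ‖x‖ ^ k / k ! := tsum_mul_left
    _ = ‖x‖ ^ 2 * Real.exp ‖x‖ := by
        rw [Real.exp_eq_exp_ℝ, exp_eq_tsum_div]

/-- The key abstract estimate: for skew-adjoint `a`, `b`,
    `‖exp a - exp b‖ ≤ ‖a - b‖`. -/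
lemma aux_key (h1 : ‖(1 : E)‖ ≤ 1) {a b : E} (ha : star a = -a) (hb : star b = -b) :
    ‖exp a - exp b‖ ≤ ‖a - b‖ := by
  set C : ℝ := ‖a‖ ^ 2 * Real.exp ‖a‖ + ‖b‖ ^ 2 * Real.exp ‖b‖ with hC
  have hC0 : 0 ≤ C := by positivity
  have claim : ∀ N : ℕ, 1 ≤ N → ‖exp a - exp b‖ ≤ ‖a - b‖ + C / N := by
    intro N hN
    have hN0 : (0 : ℝ) < N := by exact_mod_cast hN
    have hNc : (N : ℂ) ≠ 0 := by exact_mod_cast hN0.ne'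
    set x : E := ((N : ℂ))⁻¹ • a with hxdef
    set y : E := ((N : ℂ))⁻¹ • b with hydef
    have hxa : (N : ℕ) • x = a := by
      rw [hxdef, ← Nat.cast_smul_eq_nsmul ℂ, smul_smul, mul_inv_cancel₀ hNc, one_smul]
    have hyb : (N : ℕ) • y = b := by
      rw [hydef, ← Nat.cast_smul_eq_nsmul ℂ, smul_smul, mul_inv_cancel₀ hNc, one_smul]
    have hxs : star x = -x := by
      rw [hxdef, star_smul, ha, smul_neg]
      congr 1
      simp
    have hys : star y = -y := by
      rw [hydef, star_smul, hb, smul_neg]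
      congr 1
      simp
    have hxn : ‖x‖ = ‖a‖ / N := by
      rw [hxdef, norm_smul, norm_inv]
      simp [div_eq_inv_mul]
    have hyn : ‖y‖ = ‖b‖ / N := by
      rw [hydef, norm_smul, norm_inv]
      simp [div_eq_inv_mul]
    have hxa' : ‖x‖ ≤ ‖a‖ := by
      rw [hxn]; exact div_le_self (norm_nonneg a) (by exact_mod_cast hN)
    have hyb' : ‖y‖ ≤ ‖b‖ := by
      rw [hyn]; exact div_le_self (norm_nonneg b) (by exact_mod_cast hN)
    have hxy : ‖x - y‖ = ‖a - b‖ / N := by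
      have : x - y = ((N : ℂ))⁻¹ • (a - b) := by rw [hxdef, hydef, smul_sub]
      rw [this, norm_smul, norm_inv]
      simp [div_eq_inv_mul]
    -- bound ‖exp x - exp y‖
    have step1 : ‖exp x - exp y‖ ≤
        ‖x - y‖ + ‖x‖ ^ 2 * Real.exp ‖x‖ + ‖y‖ ^ 2 * Real.exp ‖y‖ := by
      have hdec : exp x - exp y = (x - y) + ((exp x - 1 - x) - (exp y - 1 - y)) := by
        abel
      calc ‖exp x - exp y‖
          ≤ ‖x - y‖ + ‖(exp x - 1 - x) - (exp y - 1 - y)‖ := hdec ▸ norm_add_le _ _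
        _ ≤ ‖x - y‖ + (‖exp x - 1 - x‖ + ‖exp y - 1 - y‖) :=
            add_le_add_right (norm_sub_le _ _) _
        _ ≤ ‖x - y‖ + (‖x‖ ^ 2 * Real.exp ‖x‖ + ‖y‖ ^ 2 * Real.exp ‖y‖) := by
            gcongr
            · exact aux_exp_sub_one_sub x
            · exact aux_exp_sub_one_sub y
        _ = _ := by ring
    have hux : ‖exp x‖ ≤ 1 := aux_norm_exp_skew_le_one h1 hxs
    have huy : ‖exp y‖ ≤ 1 := aux_norm_exp_skew_le_one h1 hys
    have step2 : ‖exp a - exp b‖ ≤ N * ‖exp x - exp y‖ := by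
      letI : NormedAlgebra ℚ E := NormedAlgebra.restrictScalars ℚ ℂ E
      rw [← hxa, ← hyb, exp_nsmul, exp_nsmul]
      exact aux_pow_sub_pow h1 hux huy N
    have hexp_mono_x : Real.exp ‖x‖ ≤ Real.exp ‖a‖ := Real.exp_le_exp.2 hxa'
    have hexp_mono_y : Real.exp ‖y‖ ≤ Real.exp ‖b‖ := Real.exp_le_exp.2 hyb'
    calc ‖exp a - exp b‖
        ≤ N * ‖exp x - exp y‖ := step2
      _ ≤ N * (‖x - y‖ + ‖x‖ ^ 2 * Real.exp ‖x‖ + ‖y‖ ^ 2 * Real.exp ‖y‖) := by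
          exact mul_le_mul_of_nonneg_left step1 hN0.le
      _ ≤ N * (‖a - b‖ / N + (‖a‖ / N) ^ 2 * Real.exp ‖a‖ + (‖b‖ / N) ^ 2 * Real.exp ‖b‖) := by
          apply mul_le_mul_of_nonneg_left _ hN0.le
          rw [hxy, hxn, hyn]
          gcongr <;> exact div_le_self (norm_nonneg _) (by exact_mod_cast hN)
      _ ≤ ‖a - b‖ + C / N := by
          rw [hC]
          have h1N : 1 ≤ (N : ℝ) := by exact_mod_cast hN
          have e1 : (N : ℝ) * (‖a - b‖ / N) = ‖a - b‖ := by field_simp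
          have e2 : (N : ℝ) * ((‖a‖ / N) ^ 2 * Real.exp ‖a‖) = ‖a‖ ^ 2 * Real.exp ‖a‖ / N := by
            field_simp
          have e3 : (N : ℝ) * ((‖b‖ / N) ^ 2 * Real.exp ‖b‖) = ‖b‖ ^ 2 * Real.exp ‖b‖ / N := by
            field_simp
          calc (N : ℝ) * (‖a - b‖ / N + (‖a‖ / N) ^ 2 * Real.exp ‖a‖ +
                  (‖b‖ / N) ^ 2 * Real.exp ‖b‖)
              = ‖a - b‖ + (‖a‖ ^ 2 * Real.exp ‖a‖ + ‖b‖ ^ 2 * Real.exp ‖b‖) / N := by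
                rw [mul_add, mul_add, e1, e2, e3]; ring
            _ ≤ ‖a - b‖ + _ / N := le_rfl
  -- take the limit N → ∞
  have hT : Filter.Tendsto (fun N : ℕ => ‖a - b‖ + C / N) Filter.atTop (nhds ‖a - b‖) := by
    have := tendsto_const_div_atTop_nhds_zero_nat C
    simpa using Filter.Tendsto.add (tendsto_const_nhds (x := ‖a - b‖)) this
  refine ge_of_tendsto hT ?_
  filter_upwards [Filter.eventually_ge_atTop 1] with N hN
  exact claim N hN

end Aux


/-- `toEuclideanCLM` commutes with the exponential. -/
lemma aux_map_exp {n : ℕ} (M : Matrix (Fin n) (Fin n) ℂ) :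
    Matrix.toEuclideanCLM (𝕜 := ℂ) (exp M) = exp (Matrix.toEuclideanCLM (𝕜 := ℂ) M) := by
  set Φ := Matrix.toEuclideanCLM (𝕜 := ℂ) (n := Fin n) with hΦdef
  let g : (EuclideanSpace ℂ (Fin n) →L[ℂ] EuclideanSpace ℂ (Fin n)) →ₗ[ℂ]
      Matrix (Fin n) (Fin n) ℂ :=
    { toFun := ⇑Φ.symm, map_add' := fun p q => map_add Φ.symm p q,
      map_smul' := fun c p => map_smul Φ.symm c p }
  let G := LinearMap.toContinuousLinearMap g
  have hS : HasSum (fun k : ℕ => ((k ! : ℂ))⁻¹ • (Φ M) ^ k) (exp (Φ M)) := by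
    rw [exp_eq_tsum (𝕂 := ℂ)]
    exact (expSeries_summable' (𝕂 := ℂ) (Φ M)).hasSum
  have hS2 := hS.mapL G
  have heq : (fun k : ℕ => G (((k ! : ℂ))⁻¹ • (Φ M) ^ k))
      = fun k : ℕ => ((k ! : ℂ))⁻¹ • M ^ k := by
    funext k
    show Φ.symm (((k ! : ℂ))⁻¹ • (Φ M) ^ k) = _
    rw [map_smul, map_pow, StarAlgEquiv.symm_apply_apply]
  rw [heq] at hS2
  have hexpM : exp M = G (exp (Φ M)) := by
    rw [exp_eq_tsum (𝕂 := ℂ)]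
    exact hS2.tsum_eq
  rw [hexpM]
  show Φ (Φ.symm _) = _
  rw [StarAlgEquiv.apply_symm_apply]

/-- The operator norm of a complex square matrix (largest singular value),
    i.e. the norm of the associated operator on Euclidean space. -/
noncomputable def opNorm {n : ℕ} (A : Matrix (Fin n) (Fin n) ℂ) : ℝ :=
  ‖Matrix.toEuclideanCLM (𝕜 := ℂ) A‖

/-- For Hermitian `A`, `B`: `‖exp(iA) - exp(iB)‖ ≤ ‖A - B‖` in operator norm. -/
theorem stmt4 {n : ℕ} (A B : Matrix (Fin n) (Fin n) ℂ)
    (hA : A.IsHermitian) (hB : B.IsHermitian) :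
    opNorm (NormedSpace.exp (Complex.I • A) - NormedSpace.exp (Complex.I • B)) ≤
      opNorm (A - B) := by
  set Φ := Matrix.toEuclideanCLM (𝕜 := ℂ) (n := Fin n) with hΦdef
  have hmapA : Φ (NormedSpace.exp (Complex.I • A)) = NormedSpace.exp (Φ (Complex.I • A)) :=
    aux_map_exp _
  have hmapB : Φ (NormedSpace.exp (Complex.I • B)) = NormedSpace.exp (Φ (Complex.I • B)) :=
    aux_map_exp _
  have hskewA : star (Φ (Complex.I • A)) = -(Φ (Complex.I • A)) := by
    rw [← map_star, ← map_neg]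
    congr 1
    rw [star_smul, Matrix.star_eq_conjTranspose, hA]
    simp [Complex.star_def, Complex.conj_I]
  have hskewB : star (Φ (Complex.I • B)) = -(Φ (Complex.I • B)) := by
    rw [← map_star, ← map_neg]
    congr 1
    rw [star_smul, Matrix.star_eq_conjTranspose, hB]
    simp [Complex.star_def, Complex.conj_I]
  have h1 : ‖(1 : EuclideanSpace ℂ (Fin n) →L[ℂ] EuclideanSpace ℂ (Fin n))‖ ≤ 1 :=
    ContinuousLinearMap.norm_id_le
  have key := aux_key h1 hskewA hskewB
  have hdiff : Φ (Complex.I • A) - Φ (Complex.I • B) = Complex.I • Φ (A - B) := by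
    rw [← map_sub, ← map_smul, smul_sub]
  rw [hdiff, norm_smul Complex.I (Φ (A - B)), Complex.norm_I, one_mul] at key
  calc opNorm (NormedSpace.exp (Complex.I • A) - NormedSpace.exp (Complex.I • B))
      = ‖NormedSpace.exp (Φ (Complex.I • A)) - NormedSpace.exp (Φ (Complex.I • B))‖ := by
        rw [opNorm, map_sub, hmapA, hmapB]
    _ ≤ ‖Φ (A - B)‖ := key
    _ = opNorm (A - B) := rfl
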